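/- Let (K,v) be a valued field with algebraic closure K̄, and let v be extended to K̄(X) for an indeterminate X so that the extension (K(X)|K,v) is valuation transcendental. If (a,γ) is a minimal pair of definition for v over K, then v(X-b) = min{γ, v(a-b)} for every b ∈ K̄. -/

import Mathlib

open IntermediateField Polynomial

namespace ValPaper

variable {Ω Γ : Type*} [Field Ω] [AddCommGroup Γ] [LinearOrder Γ] [IsOrderedAddMonoid Γ]

section Defs

variable (K : Type*) [Field K] [Algebra K Ω]

/-- The value group of an intermediate field `F` under the valuation `v`:
the subgroup of `Γ` generated by (equal to) the set of values of nonzero elements of `F`. -/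
noncomputable def valGroup (v : AddValuation Ω (WithTop Γ)) (F : IntermediateField K Ω) :
    AddSubgroup Γ :=
  AddSubgroup.closure {g : Γ | ∃ x ∈ F, x ≠ 0 ∧ v x = (g : WithTop Γ)}

/-- The ramification index `(vM : vF)`. -/
noncomputable def ramIndex (v : AddValuation Ω (WithTop Γ)) (F M : IntermediateField K Ω) : ℕ :=
  (valGroup K v F).relIndex (valGroup K v M)

/-- The valuation ring `O_F` of an intermediate field `F`. -/
noncomputable def integers (v : AddValuation Ω (WithTop Γ)) (F : IntermediateField K Ω) :
    Subring Ω where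
  carrier := {x | x ∈ F ∧ 0 ≤ v x}
  zero_mem' := ⟨zero_mem F, by simp⟩
  one_mem' := ⟨one_mem F, by simp⟩
  add_mem' := fun hx hy => ⟨add_mem hx.1 hy.1, le_trans (le_min hx.2 hy.2) (v.map_add _ _)⟩
  mul_mem' := fun hx hy => ⟨mul_mem hx.1 hy.1, by rw [v.map_mul]; exact add_nonneg hx.2 hy.2⟩
  neg_mem' := fun hx => ⟨neg_mem hx.1, by rw [v.map_neg]; exact hx.2⟩

/-- The maximal ideal of the valuation ring of `F`. -/
noncomputable def maxIdeal (v : AddValuation Ω (WithTop Γ)) (F : IntermediateField K Ω) :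
    Ideal (integers K v F) where
  carrier := {x | 0 < v (x : Ω)}
  zero_mem' := by
    show (0 : WithTop Γ) < v ((0 : integers K v F) : Ω)
    rw [show ((0 : integers K v F) : Ω) = 0 from rfl, v.map_zero]
    exact lt_of_le_of_ne le_top (by simp)
  add_mem' := fun {x y} hx hy => lt_of_lt_of_le (lt_min hx hy) (v.map_add _ _)
  smul_mem' := fun c {x} hx => by
    show (0 : WithTop Γ) < v ((c : Ω) * (x : Ω))
    rw [v.map_mul]
    exact lt_of_lt_of_le hx (le_add_of_nonneg_left c.2.2)

/-- The residue ring (in fact field) `Fv` of an intermediate field `F`. -/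
noncomputable abbrev Res (v : AddValuation Ω (WithTop Γ)) (F : IntermediateField K Ω) :=
  integers K v F ⧸ maxIdeal K v F

lemma integers_mono (v : AddValuation Ω (WithTop Γ)) {F M : IntermediateField K Ω} (h : F ≤ M) :
    integers K v F ≤ integers K v M := fun _ hx => ⟨h hx.1, hx.2⟩

/-- The canonical map between residue fields induced by an inclusion of intermediate fields. -/
noncomputable def resMap (v : AddValuation Ω (WithTop Γ)) {F M : IntermediateField K Ω}
    (h : F ≤ M) : Res K v F →+* Res K v M :=
  Ideal.quotientMap (maxIdeal K v M) (Subring.inclusion (integers_mono K v h))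
    (fun _ hx => hx)

set_option synthInstance.maxHeartbeats 1000000 in
open scoped Classical in
/-- The residue degree `[Mv : Fv]` (junk value `0` if `F ≰ M`). -/
noncomputable def resDeg (v : AddValuation Ω (WithTop Γ)) (F M : IntermediateField K Ω) : ℕ :=
  if h : F ≤ M then
    letI := (resMap K v h).toAlgebra
    Module.finrank (Res K v F) (Res K v M)
  else 0

/-- The defect `d(M|F,v)`, defined via the Lemma of Ostrowski as
`[M : F] / ((vM : vF) · [Mv : Fv])`. -/
noncomputable def defect (v : AddValuation Ω (WithTop Γ)) (F M : IntermediateField K Ω) : ℕ :=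
  relfinrank F M / (ramIndex K v F M * resDeg K v F M)

end Defs

section DefsBase

variable (F : Type*) [Field F] [Algebra F Ω]

open scoped Classical in
/-- `jnum v F a γ` is the number of `F`-conjugates `a'` of `a` (counted with multiplicity,
including `a` itself) such that `v (a - a') ≥ γ`. -/
noncomputable def jnum (v : AddValuation Ω (WithTop Γ)) (a : Ω) (γ : Γ) : ℕ :=
  Multiset.card (((minpoly F a).aroots Ω).filter fun r => (γ : WithTop Γ) ≤ v (a - r))

/-- `(a, γ)` is a minimal pair of definition for `v` over `F`:
(MP0) `a` is algebraic over `F` (i.e. `a ∈ F̄`),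
(MP1) `v (X - a) = γ = max v (X - F̄)`, and
(MP2) `v (a - b) ≥ γ` implies `[F(b) : F] ≥ [F(a) : F]` for all `b ∈ F̄`. -/
def IsMinimalPair (v : AddValuation Ω (WithTop Γ)) (X a : Ω) (γ : Γ) : Prop :=
  IsAlgebraic F a ∧ v (X - a) = (γ : WithTop Γ) ∧
    (∀ c : Ω, IsAlgebraic F c → v (X - c) ≤ (γ : WithTop Γ)) ∧
    ∀ b : Ω, IsAlgebraic F b → (γ : WithTop Γ) ≤ v (a - b) →
      Module.finrank F ↥(IntermediateField.adjoin F {a}) ≤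
        Module.finrank F ↥(IntermediateField.adjoin F {b})

/-- The decomposition group of `(F, v)` in `Ω`: all `F`-automorphisms compatible with `v`. -/
def decompGroup (v : AddValuation Ω (WithTop Γ)) : Subgroup (Ω ≃ₐ[F] Ω) where
  carrier := {σ | ∀ x : Ω, v (σ x) = v x}
  one_mem' := fun _ => rfl
  mul_mem' := fun {σ τ} hσ hτ x => by
    rw [AlgEquiv.mul_apply, hσ, hτ]
  inv_mem' := fun {σ} hσ x => by
    have h := hσ (σ⁻¹ x)
    rw [show σ (σ⁻¹ x) = x from AlgEquiv.apply_symm_apply σ x] at h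
    exact h.symm

/-- The henselization (= absolute decomposition field) of `(F, v)` inside `Ω`:
the elements of the separable closure of `F` fixed by the decomposition group. -/
noncomputable def henselAux (v : AddValuation Ω (WithTop Γ)) : IntermediateField F Ω :=
  separableClosure F Ω ⊓ IntermediateField.fixedField (decompGroup F v)

/-- The ramification group of `(F, v)` in `Ω`. -/
noncomputable def ramGroup (v : AddValuation Ω (WithTop Γ)) : Subgroup (Ω ≃ₐ[F] Ω) :=
  Subgroup.closure {σ | ∀ x ∈ separableClosure F Ω, x ≠ 0 → v x < v (σ x - x)}

/-- The absolute ramification field `F^r` of `(F, v)` inside `Ω`. -/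
noncomputable def ramField (v : AddValuation Ω (WithTop Γ)) : IntermediateField F Ω :=
  separableClosure F Ω ⊓ IntermediateField.fixedField (ramGroup F v)

end DefsBase

section DefsK

variable (K : Type*) [Field K] [Algebra K Ω]

/-- The henselization of an intermediate field `F`, viewed inside `IntermediateField K Ω`. -/
noncomputable def hensel (v : AddValuation Ω (WithTop Γ)) (F : IntermediateField K Ω) :
    IntermediateField K Ω :=
  (henselAux (↥F) v).restrictScalars K

/-- The relative algebraic closure `K̄` of `K` in `Ω` (as an intermediate field; when `Ω` is
algebraically closed this is an algebraic closure of `K`). -/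
noncomputable def algCl : IntermediateField K Ω :=
  IntermediateField.adjoin K {x : Ω | IsAlgebraic K x}

/-- The implicit constant field `IC (K(X)|K, v) := K̄ ∩ K(X)^h`. -/
noncomputable def ICfield (v : AddValuation Ω (WithTop Γ)) (X : Ω) : IntermediateField K Ω :=
  algCl K ⊓ hensel K v (IntermediateField.adjoin K {X})

/-- `(K(X)|K, v)` is value transcendental: `vK(X)/vK` has a nontorsion element,
i.e. `rat rk vK(X)/vK = 1`. -/
def ValueTrans (v : AddValuation Ω (WithTop Γ)) (X : Ω) : Prop :=
  ∃ g : Γ, g ∈ valGroup K v (IntermediateField.adjoin K {X}) ∧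
    ∀ n : ℕ, 0 < n → n • g ∉ valGroup K v (⊥ : IntermediateField K Ω)

/-- `(K(X)|K, v)` is residue transcendental: the residue field of `K(X)` contains an element
transcendental over the residue field of `K`, i.e. `trdeg (K(X)v | Kv) = 1`. -/
def ResidueTrans (v : AddValuation Ω (WithTop Γ)) (X : Ω) : Prop :=
  letI := (resMap K v (bot_le : (⊥ : IntermediateField K Ω) ≤
    IntermediateField.adjoin K {X})).toAlgebra
  ∃ ξ : Res K v (IntermediateField.adjoin K {X}),
    Transcendental (Res K v (⊥ : IntermediateField K Ω)) ξ

/-- `(K(X)|K, v)` is valuation transcendental: equality holds in the Abhyankar inequality,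
i.e. the extension is value transcendental or residue transcendental. -/
def ValuationTrans (v : AddValuation Ω (WithTop Γ)) (X : Ω) : Prop :=
  ValueTrans K v X ∨ ResidueTrans K v X

/-- `(K, v)` is a defectless field: every finite extension `M` of the henselization `K^h`
(inside `K̄ ⊆ Ω`) satisfies `[M : K^h] = (vM : vK^h)[Mv : K^h v]`. -/
def DefectlessField (v : AddValuation Ω (WithTop Γ)) : Prop :=
  ∀ M : IntermediateField K Ω, hensel K v ⊥ ≤ M → (∀ x ∈ M, IsAlgebraic K x) →
    relfinrank (hensel K v ⊥) M ≠ 0 →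
    relfinrank (hensel K v ⊥) M = ramIndex K v (hensel K v ⊥) M * resDeg K v (hensel K v ⊥) M

end DefsK

/-- The maximal ideal of the valuation ring is indeed maximal. -/
lemma maxIdeal_isMaximal (K : Type*) [Field K] [Algebra K Ω] (v : AddValuation Ω (WithTop Γ))
    (F : IntermediateField K Ω) : (maxIdeal K v F).IsMaximal := by
  rw [Ideal.isMaximal_iff]
  constructor
  · show ¬ (0 : WithTop Γ) < v ((1 : Ω))
    rw [v.map_one]
    exact lt_irrefl _
  · intro J x hIJ hxI hxJ
    have hx0 : 0 ≤ v (x : Ω) := x.2.2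
    have hxv : v (x : Ω) = 0 := le_antisymm (not_lt.mp hxI) hx0
    have hxne : (x : Ω) ≠ 0 := by
      intro h
      rw [h, v.map_zero] at hxv
      simp at hxv
    have hinv : v ((x : Ω)⁻¹) = 0 := by
      rw [v.map_inv, hxv]; simp
    have hmem : (x : Ω)⁻¹ ∈ integers K v F :=
      ⟨inv_mem (x.2.1 : (x : Ω) ∈ F), le_of_eq hinv.symm⟩
    have : (⟨(x : Ω)⁻¹, hmem⟩ * x : integers K v F) = 1 := by
      ext
      exact inv_mul_cancel₀ hxne
    have h1 : (⟨(x : Ω)⁻¹, hmem⟩ * x : integers K v F) ∈ J := J.mul_mem_left _ hxJ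
    rwa [this] at h1

/-- The residue ring of an intermediate field is a field. -/
noncomputable def resField (K : Type*) [Field K] [Algebra K Ω] (v : AddValuation Ω (WithTop Γ))
    (F : IntermediateField K Ω) : Field (Res K v F) :=
  letI := maxIdeal_isMaximal K v F
  Ideal.Quotient.field _

/-- If `(a, γ)` is a minimal pair of definition for the valuation
transcendental extension `(K(X)|K, v)`, then `v (X - b) = min (γ, v (a - b))` for all `b ∈ K̄`. -/
theorem stmt_0 {K Ω Γ : Type*} [Field K] [Field Ω] [Algebra K Ω] [IsAlgClosed Ω]
    [AddCommGroup Γ] [LinearOrder Γ] [IsOrderedAddMonoid Γ]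
    (v : AddValuation Ω (WithTop Γ)) (X : Ω) (hX : Transcendental K X)
    [Algebra.IsAlgebraic ↥(IntermediateField.adjoin K {X}) Ω]
    (hvt : ValuationTrans K v X) (a : Ω) (γ : Γ) (hmp : IsMinimalPair K v X a γ) :
    ∀ b : Ω, IsAlgebraic K b → v (X - b) = min (γ : WithTop Γ) (v (a - b)) := by
  obtain ⟨ha, hXa, hmax, _⟩ := hmp
  intro b hb
  rcases lt_or_ge (v (a - b)) (γ : WithTop Γ) with h | h
  · have e : X - b = (X - a) + (a - b) := by ring
    rw [e, AddValuation.map_add_eq_of_lt_right v (by rw [hXa]; exact h),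
      min_eq_right h.le]
  · rw [min_eq_left h]
    refine le_antisymm (hmax b hb) ?_
    have e : X - b = (X - a) + (a - b) := by ring
    rw [e]
    exact v.map_le_add (le_of_eq hXa.symm) h

end ValPaper
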